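/- Suppose 1 < a ≤ 2 and ε ∈ Σ is a sequence whose head (ε₀, ε₁, ε₂, …) belongs to the kneading invariant κ(a) of the tent map T_a. Then the derivative of b ↦ (p - q)(ε)(a, b) at b = 0 satisfies 1/(aε₋₂) - (-2a² + 7a - 2)/(2a³(a-1)) ≤ d/db (p - q)(ε)(a,b)|_{b=0} ≤ 1/(aε₋₂) - (-2a² + 7a - 8)/(2a³(a-1)). -/

import Mathlib

open Filter

/-- Depth-`k` truncation of the continued fraction
`r_n(ε)(a,b) = 1/(aε_n + b/(aε_{n+1} + b/(aε_{n+2} + ⋯)))`. -/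
noncomputable def rTrunc (a b : ℝ) (ε : ℤ → ℝ) : ℕ → ℤ → ℝ
  | 0, n => 1 / (a * ε n)
  | k + 1, n => 1 / (a * ε n + b * rTrunc a b ε k (n + 1))

/-- The continued fraction `r_n(ε)(a,b)`, as the limit of its finite truncations. -/
noncomputable def rCF (a b : ℝ) (ε : ℤ → ℝ) (n : ℤ) : ℝ :=
  limUnder atTop (fun k => rTrunc a b ε k n)

/-- Depth-`k` truncation of the continued fraction
`s_n(ε)(a,b) = 1/(-aε_n + b/(-aε_{n-1} + b/(-aε_{n-2} + ⋯)))`. -/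
noncomputable def sTrunc (a b : ℝ) (ε : ℤ → ℝ) : ℕ → ℤ → ℝ
  | 0, n => 1 / (-(a * ε n))
  | k + 1, n => 1 / (-(a * ε n) + b * sTrunc a b ε k (n - 1))

/-- The continued fraction `s_n(ε)(a,b)`, as the limit of its finite truncations. -/
noncomputable def sCF (a b : ℝ) (ε : ℤ → ℝ) (n : ℤ) : ℝ :=
  limUnder atTop (fun k => sTrunc a b ε k n)

/-- `p(ε)(a,b) = 1 - b s₋₂ + b² s₋₂s₋₃ - b³ s₋₂s₋₃s₋₄ + ⋯`. -/
noncomputable def pFun (a b : ℝ) (ε : ℤ → ℝ) : ℝ :=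
  ∑' k : ℕ, (-b) ^ k * ∏ j ∈ Finset.range k, sCF a b ε (-2 - (j : ℤ))

/-- `q(ε)(a,b) = r₀ - r₀r₁ + r₀r₁r₂ - ⋯`. -/
noncomputable def qFun (a b : ℝ) (ε : ℤ → ℝ) : ℝ :=
  ∑' n : ℕ, (-1 : ℝ) ^ n * ∏ j ∈ Finset.range (n + 1), rCF a b ε (j : ℤ)

/-- The tent map `T_a(x) = 1 - a|x|`. -/
noncomputable def tent (a : ℝ) (x : ℝ) : ℝ := 1 - a * |x|

open Topology

section CF
variable {a b : ℝ} {ε : ℤ → ℝ}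

lemma eps_abs (hε : ∀ n, ε n = 1 ∨ ε n = -1) (n : ℤ) : |ε n| = 1 := by
  rcases hε n with h | h <;> simp [h]

lemma eps_sq (hε : ∀ n, ε n = 1 ∨ ε n = -1) (n : ℤ) : ε n ^ 2 = 1 := by
  rcases hε n with h | h <;> simp [h]

lemma one_div_aeps (ha1 : 1 < a) (hε : ∀ n, ε n = 1 ∨ ε n = -1) (n : ℤ) :
    1 / (a * ε n) = ε n / a := by
  rcases hε n with h | h <;> rw [h] <;> field_simp

lemma bx_small (ha1 : 1 < a) (ha2 : a ≤ 2) (hb : |b| ≤ (a-1)^2/4) {x : ℝ}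
    (hx : |x| ≤ 2/(a+1)) : |b * x| ≤ (a-1)/2 := by
  have hxa : |x| * (a+1) ≤ 2 := by
    rw [← le_div_iff₀ (by linarith : (0:ℝ) < a+1)]; exact hx
  rw [abs_mul]
  nlinarith [abs_nonneg b, abs_nonneg x, mul_le_mul hb hxa (by positivity) (by positivity)]

lemma denom_lb (ha1 : 1 < a) (ha2 : a ≤ 2) (hb : |b| ≤ (a-1)^2/4)
    (hε : ∀ n, ε n = 1 ∨ ε n = -1) (n : ℤ) {x : ℝ}
    (hx : |x| ≤ 2/(a+1)) : (a+1)/2 ≤ |a * ε n + b * x| := by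
  have h1 : |b * x| ≤ (a-1)/2 := bx_small ha1 ha2 hb hx
  have h2 : |a * ε n| - |-(b*x)| ≤ |a * ε n - (-(b*x))| := abs_sub_abs_le_abs_sub _ _
  have h3 : |a * ε n| = a := by rw [abs_mul, eps_abs hε, mul_one, abs_of_pos (by linarith)]
  rw [abs_neg, sub_neg_eq_add, h3] at h2
  linarith

lemma rTrunc_bound (ha1 : 1 < a) (ha2 : a ≤ 2) (hb : |b| ≤ (a-1)^2/4)
    (hε : ∀ n, ε n = 1 ∨ ε n = -1) :
    ∀ k (n : ℤ), |rTrunc a b ε k n| ≤ 2/(a+1) := by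
  intro k
  induction k with
  | zero =>
    intro n
    rw [rTrunc, abs_div, abs_one, abs_mul, eps_abs hε, mul_one,
      abs_of_pos (by linarith : (0:ℝ) < a)]
    rw [div_le_div_iff₀ (by linarith) (by linarith)]
    linarith
  | succ k ih =>
    intro n
    rw [rTrunc, abs_div, abs_one]
    have hd := denom_lb ha1 ha2 hb hε n (ih (n+1))
    calc 1 / |a * ε n + b * rTrunc a b ε k (n+1)| ≤ 1 / ((a+1)/2) :=
          one_div_le_one_div_of_le (by linarith) hd
      _ = 2/(a+1) := one_div_div _ _

lemma rTrunc_diff (ha1 : 1 < a) (ha2 : a ≤ 2) (hb : |b| ≤ (a-1)^2/4)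
    (hε : ∀ n, ε n = 1 ∨ ε n = -1) :
    ∀ k (n : ℤ), |rTrunc a b ε (k+1) n - rTrunc a b ε k n| ≤ (4/(a+1)) * (1/2)^k := by
  intro k
  induction k with
  | zero =>
    intro n
    have h0 := rTrunc_bound ha1 ha2 hb hε 0 n
    have h1 := rTrunc_bound ha1 ha2 hb hε 1 n
    calc |rTrunc a b ε 1 n - rTrunc a b ε 0 n| ≤ |rTrunc a b ε 1 n| + |rTrunc a b ε 0 n| :=
          abs_sub _ _
      _ ≤ 2/(a+1) + 2/(a+1) := add_le_add h1 h0
      _ = (4/(a+1)) * (1/2)^0 := by rw [pow_zero, mul_one]; ring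
  | succ k ih =>
    intro n
    have hd1 := denom_lb ha1 ha2 hb hε n (rTrunc_bound ha1 ha2 hb hε (k+1) (n+1))
    have hd2 := denom_lb ha1 ha2 hb hε n (rTrunc_bound ha1 ha2 hb hε k (n+1))
    set d1 := a * ε n + b * rTrunc a b ε (k+1) (n+1) with hd1def
    set d2 := a * ε n + b * rTrunc a b ε k (n+1) with hd2def
    have hd1ne : d1 ≠ 0 := by intro h; rw [h] at hd1; simp at hd1; linarith
    have hd2ne : d2 ≠ 0 := by intro h; rw [h] at hd2; simp at hd2; linarith
    have key : rTrunc a b ε (k+2) n - rTrunc a b ε (k+1) n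
        = -(b * (rTrunc a b ε (k+1) (n+1) - rTrunc a b ε k (n+1))) / (d1 * d2) := by
      show 1/d1 - 1/d2 = _
      field_simp
      ring
    rw [key, abs_div, abs_neg, abs_mul, abs_mul]
    have h1 : (a+1)/2 * ((a+1)/2) ≤ |d1| * |d2| := by
      apply mul_le_mul hd1 hd2 (by linarith) (abs_nonneg _)
    have hb1 : |b| ≤ 1/4 := by nlinarith [hb]
    have ihk := ih (n+1)
    have habs1 : |rTrunc a b ε (k+1) (n+1) - rTrunc a b ε k (n+1)| ≥ 0 := abs_nonneg _
    have hq : |b| * |rTrunc a b ε (k+1) (n+1) - rTrunc a b ε k (n+1)| / (|d1| * |d2|)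
        ≤ (1/4) * ((4/(a+1)) * (1/2)^k) / 1 := by
      apply div_le_div₀ (by positivity) _ one_pos _
      · exact mul_le_mul hb1 ihk habs1 (by norm_num)
      · calc (1:ℝ) ≤ (a+1)/2 * ((a+1)/2) := by nlinarith
          _ ≤ |d1| * |d2| := h1
    calc |b| * |rTrunc a b ε (k+1) (n+1) - rTrunc a b ε k (n+1)| / (|d1| * |d2|)
        ≤ (1/4) * ((4/(a+1)) * (1/2)^k) / 1 := hq
      _ = (2/(a+1)) * (1/2)^(k+1) := by rw [div_one, pow_succ]; ring
      _ ≤ (4/(a+1)) * (1/2)^(k+1) := by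
          apply mul_le_mul_of_nonneg_right _ (by positivity)
          apply div_le_div_of_nonneg_right (by norm_num) (by linarith)

end CF

section CF2
variable {a b : ℝ} {ε : ℤ → ℝ}

lemma rCF_tendsto (ha1 : 1 < a) (ha2 : a ≤ 2) (hb : |b| ≤ (a-1)^2/4)
    (hε : ∀ n, ε n = 1 ∨ ε n = -1) (n : ℤ) :
    Tendsto (fun k => rTrunc a b ε k n) atTop (𝓝 (rCF a b ε n)) := by
  have hC : CauchySeq (fun k => rTrunc a b ε k n) := by
    apply cauchySeq_of_le_geometric (1/2) (4/(a+1)) (by norm_num)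
    intro k
    rw [Real.dist_eq, abs_sub_comm]
    exact rTrunc_diff ha1 ha2 hb hε k n
  obtain ⟨l, hl⟩ := cauchySeq_tendsto_of_complete hC
  rw [rCF, hl.limUnder_eq]
  exact hl

lemma rCF_bound (ha1 : 1 < a) (ha2 : a ≤ 2) (hb : |b| ≤ (a-1)^2/4)
    (hε : ∀ n, ε n = 1 ∨ ε n = -1) (n : ℤ) : |rCF a b ε n| ≤ 2/(a+1) := by
  have h := (rCF_tendsto ha1 ha2 hb hε n).abs
  exact le_of_tendsto h (Filter.Eventually.of_forall (fun k => rTrunc_bound ha1 ha2 hb hε k n))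

lemma rCF_denom (ha1 : 1 < a) (ha2 : a ≤ 2) (hb : |b| ≤ (a-1)^2/4)
    (hε : ∀ n, ε n = 1 ∨ ε n = -1) (n : ℤ) :
    (a+1)/2 ≤ |a * ε n + b * rCF a b ε (n+1)| :=
  denom_lb ha1 ha2 hb hε n (rCF_bound ha1 ha2 hb hε (n+1))

lemma rCF_denom_ne (ha1 : 1 < a) (ha2 : a ≤ 2) (hb : |b| ≤ (a-1)^2/4)
    (hε : ∀ n, ε n = 1 ∨ ε n = -1) (n : ℤ) :
    a * ε n + b * rCF a b ε (n+1) ≠ 0 := by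
  intro h
  have := rCF_denom ha1 ha2 hb hε n
  rw [h] at this; simp at this; linarith

lemma rCF_fixed (ha1 : 1 < a) (ha2 : a ≤ 2) (hb : |b| ≤ (a-1)^2/4)
    (hε : ∀ n, ε n = 1 ∨ ε n = -1) (n : ℤ) :
    rCF a b ε n = 1 / (a * ε n + b * rCF a b ε (n+1)) := by
  have h1 : Tendsto (fun k => rTrunc a b ε (k+1) n) atTop (𝓝 (rCF a b ε n)) :=
    (rCF_tendsto ha1 ha2 hb hε n).comp (tendsto_add_atTop_nat 1)
  have h2 : Tendsto (fun k => 1 / (a * ε n + b * rTrunc a b ε k (n+1))) atTop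
      (𝓝 (1 / (a * ε n + b * rCF a b ε (n+1)))) := by
    apply Tendsto.div tendsto_const_nhds
    · exact Tendsto.const_add _ ((rCF_tendsto ha1 ha2 hb hε (n+1)).const_mul b)
    · exact rCF_denom_ne ha1 ha2 hb hε n
  have h3 : (fun k => rTrunc a b ε (k+1) n) = fun k => 1 / (a * ε n + b * rTrunc a b ε k (n+1)) := by
    funext k; rw [rTrunc]
  rw [h3] at h1
  exact tendsto_nhds_unique h1 h2

end CF2

lemma key1_aux (a b e1 r : ℝ) (ha : a ≠ 0) (he : e1 = 1 ∨ e1 = -1)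
    (hd : a * e1 + b * r ≠ 0) :
    1/(a*e1 + b*r) - e1/a = -(b*r)/((a*e1)*(a*e1 + b*r)) := by
  rcases he with h|h <;> subst h <;>
    [simp only [mul_one] at hd ⊢; simp only [mul_neg_one] at hd ⊢] <;>
    field_simp <;> ring_nf <;> try tauto

lemma key2_aux (a b e1 e2 r : ℝ) (ha : a ≠ 0) (he : e1 = 1 ∨ e1 = -1)
    (hd : a * e1 + b * r ≠ 0) :
    1/(a*e1 + b*r) - e1/a + b*e2/a^3
      = -(b*(r - e2/a))/a^2 + b^2*r^2/(a^2*(a*e1 + b*r)) := by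
  rcases he with h|h <;> subst h <;>
    [simp only [mul_one] at hd ⊢; simp only [mul_neg_one] at hd ⊢] <;>
    field_simp <;> ring_nf <;> try tauto

section CF3
variable {a b : ℝ} {ε : ℤ → ℝ}

lemma rCF_first (ha1 : 1 < a) (ha2 : a ≤ 2) (hb : |b| ≤ (a-1)^2/4)
    (hε : ∀ n, ε n = 1 ∨ ε n = -1) (n : ℤ) :
    |rCF a b ε n - ε n / a| ≤ |b| := by
  have ha0 : a ≠ 0 := by linarith
  have hdne := rCF_denom_ne ha1 ha2 hb hε n
  have hd := rCF_denom ha1 ha2 hb hε n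
  have hr' := rCF_bound ha1 ha2 hb hε (n+1)
  have key := key1_aux a b (ε n) (rCF a b ε (n+1)) ha0 (hε n) hdne
  rw [rCF_fixed ha1 ha2 hb hε n, key]
  rw [abs_div, abs_mul, abs_mul, abs_neg, abs_mul, eps_abs hε, mul_one,
    abs_of_pos (by linarith : (0:ℝ) < a)]
  have hden1 : (1:ℝ) ≤ a * |a * ε n + b * rCF a b ε (n+1)| := by nlinarith
  have hr1 : |rCF a b ε (n+1)| ≤ 1 := by
    refine hr'.trans ?_
    rw [div_le_one (by linarith)]; linarith
  calc |b| * |rCF a b ε (n+1)| / (a * |a * ε n + b * rCF a b ε (n+1)|)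
      ≤ |b| * |rCF a b ε (n+1)| / 1 := by
        apply div_le_div_of_nonneg_left (by positivity) one_pos hden1
    _ = |b| * |rCF a b ε (n+1)| := div_one _
    _ ≤ |b| * 1 := mul_le_mul_of_nonneg_left hr1 (abs_nonneg b)
    _ = |b| := mul_one _

lemma rCF_second (ha1 : 1 < a) (ha2 : a ≤ 2) (hb : |b| ≤ (a-1)^2/4)
    (hε : ∀ n, ε n = 1 ∨ ε n = -1) (n : ℤ) :
    |rCF a b ε n - ε n / a + b * ε (n+1) / a^3| ≤ 2 * b^2 := by
  have ha0 : a ≠ 0 := by linarith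
  have hdne := rCF_denom_ne ha1 ha2 hb hε n
  have hd := rCF_denom ha1 ha2 hb hε n
  have hr' := rCF_bound ha1 ha2 hb hε (n+1)
  have hr1 : |rCF a b ε (n+1)| ≤ 1 := by
    refine hr'.trans ?_
    rw [div_le_one (by linarith)]; linarith
  have heta := rCF_first ha1 ha2 hb hε (n+1)
  have key := key2_aux a b (ε n) (ε (n+1)) (rCF a b ε (n+1)) ha0 (hε n) hdne
  rw [rCF_fixed ha1 ha2 hb hε n, key]
  have ha2sq : (1:ℝ) ≤ a^2 := by nlinarith
  have t1 : |-(b * (rCF a b ε (n+1) - ε (n+1) / a)) / a^2| ≤ b^2 := by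
    rw [abs_div, abs_neg, abs_mul, abs_of_pos (by positivity : (0:ℝ) < a^2)]
    calc |b| * |rCF a b ε (n+1) - ε (n+1) / a| / a^2
        ≤ |b| * |b| / 1 := by
          apply div_le_div₀ (by positivity)
            (mul_le_mul_of_nonneg_left heta (abs_nonneg b)) one_pos ha2sq
      _ = b^2 := by rw [div_one, ← abs_mul, ← sq, abs_sq]
  have t2 : |b^2 * (rCF a b ε (n+1))^2 / (a^2 * (a * ε n + b * rCF a b ε (n+1)))| ≤ b^2 := by
    rw [abs_div]
    have hnum : |b^2 * (rCF a b ε (n+1))^2| = b^2 * (rCF a b ε (n+1))^2 :=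
      abs_of_nonneg (by positivity)
    have hden : (1:ℝ) ≤ |a^2 * (a * ε n + b * rCF a b ε (n+1))| := by
      rw [abs_mul, abs_of_pos (by positivity : (0:ℝ) < a^2)]
      nlinarith
    have hr2 : (rCF a b ε (n+1))^2 ≤ 1 := by
      nlinarith [sq_abs (rCF a b ε (n+1)), abs_nonneg (rCF a b ε (n+1))]
    rw [hnum]
    calc b^2 * (rCF a b ε (n+1))^2 / |a^2 * (a * ε n + b * rCF a b ε (n+1))|
        ≤ b^2 * (rCF a b ε (n+1))^2 / 1 :=
          div_le_div_of_nonneg_left (by positivity) one_pos hden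
      _ = b^2 * (rCF a b ε (n+1))^2 := div_one _
      _ ≤ b^2 * 1 := mul_le_mul_of_nonneg_left hr2 (by positivity)
      _ = b^2 := mul_one _
  calc |_ + _| ≤ _ + _ := abs_add_le _ _
    _ ≤ b^2 + b^2 := add_le_add t1 t2
    _ = 2 * b^2 := by ring

end CF3

section CF4
variable {a b : ℝ} {ε : ℤ → ℝ}

lemma rTrunc_zero (ha1 : 1 < a) : ∀ (k : ℕ) (n : ℤ), rTrunc a 0 ε k n = 1 / (a * ε n) := by
  intro k
  induction k with
  | zero => intro n; rfl
  | succ k ih => intro n; rw [rTrunc]; simp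

lemma rCF_zero (ha1 : 1 < a) (hε : ∀ n, ε n = 1 ∨ ε n = -1) (n : ℤ) :
    rCF a 0 ε n = ε n / a := by
  rw [rCF]
  have h : (fun k => rTrunc a 0 ε k n) = fun _ => 1 / (a * ε n) :=
    funext (fun k => rTrunc_zero ha1 k n)
  rw [h, (tendsto_const_nhds).limUnder_eq, one_div_aeps ha1 hε n]

lemma sTrunc_eq (hε : ∀ n, ε n = 1 ∨ ε n = -1) :
    ∀ (k : ℕ) (n : ℤ), sTrunc a b ε k n = rTrunc a b (fun m => -ε (-m)) k (-n) := by
  intro k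
  induction k with
  | zero => intro n; rw [sTrunc, rTrunc]; simp only [neg_neg]; ring_nf
  | succ k ih =>
    intro n
    rw [sTrunc, rTrunc, ih (n-1)]
    have h1 : -(n-1) = -n+1 := by ring
    rw [h1]
    simp only [neg_neg]
    ring_nf

lemma sCF_eq (hε : ∀ n, ε n = 1 ∨ ε n = -1) (n : ℤ) :
    sCF a b ε n = rCF a b (fun m => -ε (-m)) (-n) := by
  rw [sCF, rCF]
  congr 1
  funext k
  exact sTrunc_eq hε k n

lemma eps'_pm (hε : ∀ n, ε n = 1 ∨ ε n = -1) :
    ∀ m : ℤ, (fun m => -ε (-m)) m = 1 ∨ (fun m => -ε (-m)) m = -1 := by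
  intro m
  rcases hε (-m) with h | h <;> simp [h]

lemma sCF_bound (ha1 : 1 < a) (ha2 : a ≤ 2) (hb : |b| ≤ (a-1)^2/4)
    (hε : ∀ n, ε n = 1 ∨ ε n = -1) (n : ℤ) : |sCF a b ε n| ≤ 2/(a+1) := by
  rw [sCF_eq hε n]
  exact rCF_bound ha1 ha2 hb (eps'_pm hε) (-n)

lemma sCF_first (ha1 : 1 < a) (ha2 : a ≤ 2) (hb : |b| ≤ (a-1)^2/4)
    (hε : ∀ n, ε n = 1 ∨ ε n = -1) (n : ℤ) :
    |sCF a b ε n + ε n / a| ≤ |b| := by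
  rw [sCF_eq hε n]
  have h := rCF_first ha1 ha2 hb (eps'_pm hε) (-n)
  simp only [neg_neg] at h
  rw [neg_div, sub_neg_eq_add] at h
  exact h

end CF4

noncomputable def Aseq (a : ℝ) (ε : ℤ → ℝ) : ℕ → ℝ
  | 0 => 1
  | m + 1 => Aseq a ε m * (ε m / a)

noncomputable def Bseq (a : ℝ) (ε : ℤ → ℝ) : ℕ → ℝ
  | 0 => 0
  | m + 1 => Bseq a ε m * (ε m / a) + Aseq a ε m * (-ε ((m : ℤ) + 1) / a ^ 3)

noncomputable def Gprod (a b : ℝ) (ε : ℤ → ℝ) (m : ℕ) : ℝ :=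
  ∏ j ∈ Finset.range m, rCF a b ε (j : ℤ)

section Expand
variable {a b : ℝ} {ε : ℤ → ℝ}

lemma Aseq_eq_prod (m : ℕ) : Aseq a ε m = ∏ j ∈ Finset.range m, (ε j / a) := by
  induction m with
  | zero => rfl
  | succ m ih => rw [Finset.prod_range_succ, Aseq, ih]

lemma Gprod_succ (m : ℕ) : Gprod a b ε (m+1) = Gprod a b ε m * rCF a b ε m := by
  rw [Gprod, Finset.prod_range_succ, Gprod]

lemma v_facts (ha1 : 1 < a) (ha2 : a ≤ 2) :
    0 < 2/(a+1) ∧ 2/3 ≤ 2/(a+1) ∧ 2/(a+1) ≤ 1 := by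
  refine ⟨by positivity, ?_, ?_⟩
  · rw [div_le_div_iff₀ (by norm_num) (by linarith)]; linarith
  · rw [div_le_one (by linarith)]; linarith

lemma Aseq_bound (ha1 : 1 < a) (ha2 : a ≤ 2) (hε : ∀ n, ε n = 1 ∨ ε n = -1) (m : ℕ) :
    |Aseq a ε m| ≤ (2/(a+1))^m := by
  obtain ⟨hv0, hv23, hv1⟩ := v_facts ha1 ha2
  induction m with
  | zero => simp [Aseq]
  | succ m ih =>
    rw [Aseq, abs_mul, pow_succ]
    apply mul_le_mul ih _ (abs_nonneg _) (by positivity)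
    rw [abs_div, eps_abs hε, abs_of_pos (by linarith : (0:ℝ) < a)]
    rw [div_le_div_iff₀ (by linarith) (by linarith)]; linarith

lemma eps_div_bound (ha1 : 1 < a) (ha2 : a ≤ 2) (hε : ∀ n, ε n = 1 ∨ ε n = -1) (n : ℤ) :
    |ε n / a| ≤ 2/(a+1) := by
  rw [abs_div, eps_abs hε, abs_of_pos (by linarith : (0:ℝ) < a)]
  rw [div_le_div_iff₀ (by linarith) (by linarith)]; linarith

lemma y_bound (ha1 : 1 < a) (hε : ∀ n, ε n = 1 ∨ ε n = -1) (n : ℤ) :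
    |(-ε n) / a^3| ≤ 1 := by
  rw [abs_div, abs_neg, eps_abs hε, abs_of_pos (by positivity : (0:ℝ) < a^3)]
  rw [div_le_one (by positivity)]
  nlinarith [mul_nonneg (by linarith : (0:ℝ) ≤ a - 1) (by positivity : (0:ℝ) ≤ a^2 + a + 1)]

lemma Bseq_bound (ha1 : 1 < a) (ha2 : a ≤ 2) (hε : ∀ n, ε n = 1 ∨ ε n = -1) (m : ℕ) :
    |Bseq a ε m| * (2/(a+1)) ≤ m * (2/(a+1))^m := by
  obtain ⟨hv0, hv23, hv1⟩ := v_facts ha1 ha2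
  induction m with
  | zero => simp [Bseq]
  | succ m ih =>
    rw [Bseq]
    have h1 : |Bseq a ε m * (ε m / a) + Aseq a ε m * (-ε ((m : ℤ) + 1) / a ^ 3)|
        ≤ |Bseq a ε m| * (2/(a+1)) + (2/(a+1))^m := by
      calc |Bseq a ε m * (ε m / a) + Aseq a ε m * (-ε ((m : ℤ) + 1) / a ^ 3)|
          ≤ |Bseq a ε m| * |ε (m:ℤ) / a| + |Aseq a ε m| * |(-ε ((m : ℤ) + 1)) / a ^ 3| := by
            refine (abs_add_le _ _).trans ?_
            rw [abs_mul, abs_mul]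
        _ ≤ |Bseq a ε m| * (2/(a+1)) + (2/(a+1))^m * 1 := by
            apply add_le_add
            · exact mul_le_mul_of_nonneg_left (eps_div_bound ha1 ha2 hε _) (abs_nonneg _)
            · exact mul_le_mul (Aseq_bound ha1 ha2 hε m) (y_bound ha1 hε _) (abs_nonneg _)
                (by positivity)
        _ = |Bseq a ε m| * (2/(a+1)) + (2/(a+1))^m := by rw [mul_one]
    calc |Bseq a ε m * (ε m / a) + Aseq a ε m * (-ε ((m : ℤ) + 1) / a ^ 3)| * (2/(a+1))
        ≤ (|Bseq a ε m| * (2/(a+1)) + (2/(a+1))^m) * (2/(a+1)) :=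
          mul_le_mul_of_nonneg_right h1 (by positivity)
      _ ≤ (m * (2/(a+1))^m + (2/(a+1))^m) * (2/(a+1)) :=
          mul_le_mul_of_nonneg_right (by linarith) (by positivity)
      _ = ((m+1 : ℕ) : ℝ) * (2/(a+1))^(m+1) := by rw [pow_succ]; push_cast; ring

lemma Gprod_bound (ha1 : 1 < a) (ha2 : a ≤ 2) (hb : |b| ≤ (a-1)^2/4)
    (hε : ∀ n, ε n = 1 ∨ ε n = -1) (m : ℕ) :
    |Gprod a b ε m| ≤ (2/(a+1))^m := by
  induction m with
  | zero => simp [Gprod]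
  | succ m ih =>
    rw [Gprod_succ, abs_mul, pow_succ]
    exact mul_le_mul ih (rCF_bound ha1 ha2 hb hε _) (abs_nonneg _) (by positivity)

end Expand

section Delta
variable {a b : ℝ} {ε : ℤ → ℝ}

lemma Delta_bound (ha1 : 1 < a) (ha2 : a ≤ 2) (hb : |b| ≤ (a-1)^2/4)
    (hε : ∀ n, ε n = 1 ∨ ε n = -1) (m : ℕ) :
    |Gprod a b ε m - Aseq a ε m - b * Bseq a ε m| * (2/(a+1))
      ≤ 3 * m^2 * b^2 * (2/(a+1))^m := by
  obtain ⟨hv0, hv23, hv1⟩ := v_facts ha1 ha2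
  have hb14 : |b| ≤ 1/4 := by nlinarith [hb]
  induction m with
  | zero => simp [Gprod, Aseq, Bseq]
  | succ m ih =>
    have hrec : Gprod a b ε (m+1) - Aseq a ε (m+1) - b * Bseq a ε (m+1)
        = (Gprod a b ε m - Aseq a ε m - b * Bseq a ε m) * rCF a b ε m
          + b^2 * Bseq a ε m * (-ε ((m:ℤ)+1) / a^3)
          + (Aseq a ε m + b * Bseq a ε m)
            * (rCF a b ε m - ε m / a + b * ε ((m:ℤ)+1) / a^3) := by
      rw [Gprod_succ, Aseq, Bseq]
      ring
    have hg := rCF_bound ha1 ha2 hb hε (m : ℤ)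
    have he := rCF_second ha1 ha2 hb hε (m : ℤ)
    have hBm := Bseq_bound ha1 ha2 hε m
    have hAm := Aseq_bound ha1 ha2 hε m
    have hym := y_bound ha1 hε ((m:ℤ)+1)
    have hP : (0:ℝ) ≤ (2/(a+1))^m := by positivity
    have hBabs : (0:ℝ) ≤ |Bseq a ε m| := abs_nonneg _
    set D := |Gprod a b ε m - Aseq a ε m - b * Bseq a ε m| with hD
    set B := |Bseq a ε m| with hBdef
    set P := (2/(a+1))^m with hPdef
    set v := 2/(a+1) with hvdef
    have h1 : |Gprod a b ε (m+1) - Aseq a ε (m+1) - b * Bseq a ε (m+1)|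
        ≤ D * v + b^2 * B * 1 + (P + |b| * B) * (2 * b^2) := by
      rw [hrec]
      refine (abs_add_le _ _).trans (add_le_add ((abs_add_le _ _).trans (add_le_add ?_ ?_)) ?_)
      · rw [abs_mul]
        exact mul_le_mul_of_nonneg_left hg (abs_nonneg _)
      · rw [abs_mul, abs_mul, abs_pow, sq_abs]
        exact mul_le_mul_of_nonneg_left hym (by positivity)
      · rw [abs_mul]
        refine mul_le_mul ?_ he (abs_nonneg _) (by positivity)
        exact (abs_add_le _ _).trans (by rw [abs_mul]; exact add_le_add hAm le_rfl)
    have h2 : |Gprod a b ε (m+1) - Aseq a ε (m+1) - b * Bseq a ε (m+1)| * v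
        ≤ (D * v + b^2 * B * 1 + (P + |b| * B) * (2 * b^2)) * v :=
      mul_le_mul_of_nonneg_right h1 (by positivity)
    refine h2.trans ?_
    have hDv : D * v ≤ 3 * m^2 * b^2 * P := ih
    have hBv : B * v ≤ m * P := hBm
    have hone : ((m+1 : ℕ) : ℝ) = (m : ℝ) + 1 := by push_cast; ring
    rw [hone, pow_succ v m, ← hPdef]
    have hbB : |b| * B * v ≤ (1/4) * (m * P) := by
      calc |b| * B * v = |b| * (B * v) := by ring
        _ ≤ (1/4) * (m * P) :=
          mul_le_mul hb14 hBv (by positivity) (by norm_num)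
    have hvne : v ≠ 0 := by positivity
    have hmn : (0:ℝ) ≤ (m:ℝ) := Nat.cast_nonneg m
    nlinarith [mul_nonneg (mul_nonneg (sq_nonneg b) hP) (mul_nonneg hmn (by linarith : (0:ℝ) ≤ v - 2/3)),
      mul_nonneg (mul_nonneg (sq_nonneg b) hP) (by linarith : (0:ℝ) ≤ v - 2/3),
      mul_nonneg (mul_nonneg (sq_nonneg b) hP) hmn,
      mul_nonneg (sq_nonneg b) hP,
      mul_le_mul_of_nonneg_right hDv (by positivity : (0:ℝ) ≤ v),
      mul_le_mul_of_nonneg_right hBv (sq_nonneg b),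
      mul_le_mul_of_nonneg_right hbB (mul_nonneg (by norm_num : (0:ℝ) ≤ 2) (sq_nonneg b))]

end Delta

noncomputable def Qzero (a : ℝ) (ε : ℤ → ℝ) : ℝ := ∑' n : ℕ, (-1:ℝ)^n * Aseq a ε (n+1)
noncomputable def Qone (a : ℝ) (ε : ℤ → ℝ) : ℝ := ∑' n : ℕ, (-1:ℝ)^n * Bseq a ε (n+1)
noncomputable def Cq (a : ℝ) : ℝ := ∑' n : ℕ, 3*((n:ℝ)+1)^2*(2/(a+1))^n

section PQ
variable {a b : ℝ} {ε : ℤ → ℝ}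

lemma sProd_bound (ha1 : 1 < a) (ha2 : a ≤ 2) (hb : |b| ≤ (a-1)^2/4)
    (hε : ∀ n, ε n = 1 ∨ ε n = -1) (k : ℕ) :
    |∏ j ∈ Finset.range k, sCF a b ε (-2 - (j:ℤ))| ≤ (2/(a+1))^k := by
  rw [Finset.abs_prod]
  calc ∏ j ∈ Finset.range k, |sCF a b ε (-2 - (j:ℤ))|
      ≤ ∏ j ∈ Finset.range k, (2/(a+1)) :=
        Finset.prod_le_prod (fun j _ => abs_nonneg _)
          (fun j _ => sCF_bound ha1 ha2 hb hε _)
    _ = (2/(a+1))^k := by rw [Finset.prod_const, Finset.card_range]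

lemma summable_geom_v (ha1 : 1 < a) (ha2 : a ≤ 2) : Summable (fun k : ℕ => (2/(a+1))^k) := by
  obtain ⟨hv0, hv23, hv1⟩ := v_facts ha1 ha2
  apply summable_geometric_of_lt_one (le_of_lt hv0)
  rw [div_lt_one (by linarith)]; linarith

lemma summable_nv (ha1 : 1 < a) (ha2 : a ≤ 2) :
    Summable (fun n : ℕ => ((n:ℝ)+1) * (2/(a+1))^n) := by
  obtain ⟨hv0, hv23, hv1⟩ := v_facts ha1 ha2
  have hvlt : 2/(a+1) < 1 := by rw [div_lt_one (by linarith)]; linarith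
  have h1 : Summable (fun n : ℕ => (n:ℝ) * (2/(a+1))^n) := by
    have := summable_pow_mul_geometric_of_norm_lt_one 1 (r := 2/(a+1))
      (by rw [Real.norm_eq_abs, abs_of_pos hv0]; exact hvlt)
    simpa using this
  have h2 := (summable_geom_v ha1 ha2)
  have := h1.add h2
  convert this using 2 with n
  ring

lemma summable_n2v (ha1 : 1 < a) (ha2 : a ≤ 2) :
    Summable (fun n : ℕ => 3*((n:ℝ)+1)^2 * (2/(a+1))^n) := by
  obtain ⟨hv0, hv23, hv1⟩ := v_facts ha1 ha2
  have hvlt : 2/(a+1) < 1 := by rw [div_lt_one (by linarith)]; linarith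
  have hnorm : ‖2/(a+1)‖ < 1 := by rw [Real.norm_eq_abs, abs_of_pos hv0]; exact hvlt
  have h2 : Summable (fun n : ℕ => ((n:ℝ))^2 * (2/(a+1))^n) := by
    have := summable_pow_mul_geometric_of_norm_lt_one 2 (r := 2/(a+1)) hnorm
    simpa using this
  have h1 : Summable (fun n : ℕ => (n:ℝ) * (2/(a+1))^n) := by
    have := summable_pow_mul_geometric_of_norm_lt_one 1 (r := 2/(a+1)) hnorm
    simpa using this
  have h0 := summable_geom_v ha1 ha2
  have := ((h2.add (h1.mul_left 2)).add h0).mul_left 3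
  convert this using 2 with n
  · rfl
  ring

lemma Cq_nonneg (ha1 : 1 < a) (ha2 : a ≤ 2) : 0 ≤ Cq a := by
  apply tsum_nonneg
  intro n
  positivity

lemma summable_qterm (ha1 : 1 < a) (ha2 : a ≤ 2) (hb : |b| ≤ (a-1)^2/4)
    (hε : ∀ n, ε n = 1 ∨ ε n = -1) :
    Summable (fun n : ℕ => (-1:ℝ)^n * Gprod a b ε (n+1)) := by
  obtain ⟨hv0, hv23, hv1⟩ := v_facts ha1 ha2
  apply Summable.of_norm_bounded (summable_geom_v ha1 ha2)
  intro n
  rw [Real.norm_eq_abs, abs_mul, abs_pow, abs_neg, abs_one, one_pow, one_mul]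
  calc |Gprod a b ε (n+1)| ≤ (2/(a+1))^(n+1) := Gprod_bound ha1 ha2 hb hε (n+1)
    _ ≤ (2/(a+1))^n := by
        rw [pow_succ]
        nlinarith [pow_nonneg (le_of_lt hv0) n]

lemma summable_Aterm (ha1 : 1 < a) (ha2 : a ≤ 2) (hε : ∀ n, ε n = 1 ∨ ε n = -1) :
    Summable (fun n : ℕ => (-1:ℝ)^n * Aseq a ε (n+1)) := by
  obtain ⟨hv0, hv23, hv1⟩ := v_facts ha1 ha2
  apply Summable.of_norm_bounded (summable_geom_v ha1 ha2)
  intro n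
  rw [Real.norm_eq_abs, abs_mul, abs_pow, abs_neg, abs_one, one_pow, one_mul]
  calc |Aseq a ε (n+1)| ≤ (2/(a+1))^(n+1) := Aseq_bound ha1 ha2 hε (n+1)
    _ ≤ (2/(a+1))^n := by
        rw [pow_succ]
        nlinarith [pow_nonneg (le_of_lt hv0) n]

lemma Bseq_bound' (ha1 : 1 < a) (ha2 : a ≤ 2) (hε : ∀ n, ε n = 1 ∨ ε n = -1) (m : ℕ) :
    |Bseq a ε m| ≤ m * (2/(a+1))^m / (2/(a+1)) := by
  obtain ⟨hv0, hv23, hv1⟩ := v_facts ha1 ha2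
  rw [le_div_iff₀ hv0]
  exact Bseq_bound ha1 ha2 hε m

lemma summable_Bterm (ha1 : 1 < a) (ha2 : a ≤ 2) (hε : ∀ n, ε n = 1 ∨ ε n = -1) :
    Summable (fun n : ℕ => (-1:ℝ)^n * Bseq a ε (n+1)) := by
  obtain ⟨hv0, hv23, hv1⟩ := v_facts ha1 ha2
  apply Summable.of_norm_bounded (summable_nv ha1 ha2)
  intro n
  rw [Real.norm_eq_abs, abs_mul, abs_pow, abs_neg, abs_one, one_pow, one_mul]
  calc |Bseq a ε (n+1)| ≤ ((n+1:ℕ):ℝ) * (2/(a+1))^(n+1) / (2/(a+1)) := Bseq_bound' ha1 ha2 hε (n+1)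
    _ = ((n:ℝ)+1) * (2/(a+1))^n := by
        push_cast
        rw [pow_succ]
        field_simp

end PQ

section PQ2
variable {a b : ℝ} {ε : ℤ → ℝ}

lemma summable_pterm (ha1 : 1 < a) (ha2 : a ≤ 2) (hb : |b| ≤ (a-1)^2/4)
    (hε : ∀ n, ε n = 1 ∨ ε n = -1) :
    Summable (fun k : ℕ => (-b)^k * ∏ j ∈ Finset.range k, sCF a b ε (-2 - (j:ℤ))) := by
  obtain ⟨hv0, hv23, hv1⟩ := v_facts ha1 ha2
  have hb14 : |b| ≤ 1/4 := by nlinarith [hb]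
  apply Summable.of_norm_bounded (g := fun k : ℕ => (1/4:ℝ)^k)
    (summable_geometric_of_lt_one (by norm_num) (by norm_num))
  intro k
  rw [Real.norm_eq_abs, abs_mul, abs_pow, abs_neg]
  calc |b|^k * |∏ j ∈ Finset.range k, sCF a b ε (-2 - (j:ℤ))|
      ≤ (1/4)^k * (2/(a+1))^k := by
        apply mul_le_mul (pow_le_pow_left₀ (abs_nonneg b) hb14 k)
          (sProd_bound ha1 ha2 hb hε k) (abs_nonneg _) (by positivity)
    _ ≤ (1/4)^k * 1 := by
        apply mul_le_mul_of_nonneg_left (pow_le_one₀ (le_of_lt hv0) hv1) (by positivity)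
    _ = (1/4)^k := mul_one _

lemma p_expand (ha1 : 1 < a) (ha2 : a ≤ 2) (hb : |b| ≤ (a-1)^2/4)
    (hε : ∀ n, ε n = 1 ∨ ε n = -1) :
    |pFun a b ε - 1 - b * (ε (-2) / a)| ≤ 3 * b^2 := by
  obtain ⟨hv0, hv23, hv1⟩ := v_facts ha1 ha2
  have hb14 : |b| ≤ 1/4 := by nlinarith [hb]
  set f : ℕ → ℝ := fun k => (-b)^k * ∏ j ∈ Finset.range k, sCF a b ε (-2 - (j:ℤ)) with hf
  have hsum : Summable f := summable_pterm ha1 ha2 hb hε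
  have hsum1 : Summable (fun k => f (k+1)) := by
    rw [← summable_nat_add_iff 1] at hsum
    exact hsum
  have hsplit : pFun a b ε = f 0 + (f 1 + ∑' k, f (k+2)) := by
    rw [pFun, ← hf, Summable.tsum_eq_zero_add hsum, Summable.tsum_eq_zero_add hsum1]
  have hf0 : f 0 = 1 := by simp [hf]
  have hf1 : f 1 = -b * sCF a b ε (-2) := by
    rw [hf]
    simp [Finset.prod_range_one]
  have htail : |∑' k, f (k+2)| ≤ (4/3) * b^2 := by
    have hbd : ∀ k : ℕ, ‖f (k+2)‖ ≤ b^2 * (1/4)^k := by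
      intro k
      rw [Real.norm_eq_abs, hf]
      simp only []
      rw [abs_mul, abs_pow, abs_neg]
      calc |b|^(k+2) * |∏ j ∈ Finset.range (k+2), sCF a b ε (-2 - (j:ℤ))|
          ≤ |b|^(k+2) * 1 := by
            apply mul_le_mul_of_nonneg_left _ (by positivity)
            exact (sProd_bound ha1 ha2 hb hε (k+2)).trans (pow_le_one₀ (le_of_lt hv0) hv1)
        _ = |b|^2 * |b|^k := by rw [mul_one, pow_add]; ring
        _ ≤ b^2 * (1/4)^k := by
            rw [sq_abs]
            exact mul_le_mul_of_nonneg_left (pow_le_pow_left₀ (abs_nonneg b) hb14 k) (sq_nonneg b)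
    have hs2 : Summable (fun k => f (k+2)) := by
      rw [← summable_nat_add_iff 2] at hsum
      exact hsum
    have hs2n : Summable (fun k => ‖f (k+2)‖) := hs2.abs
    have hsg : Summable (fun k : ℕ => b^2 * (1/4:ℝ)^k) :=
      (summable_geometric_of_lt_one (by norm_num) (by norm_num)).mul_left _
    calc |∑' k, f (k+2)| ≤ ∑' k, b^2 * (1/4)^k := by
          rw [← Real.norm_eq_abs]
          exact (norm_tsum_le_tsum_norm hs2n).trans (Summable.tsum_le_tsum hbd hs2n hsg)
      _ = b^2 * (4/3) := by
          rw [tsum_mul_left, tsum_geometric_of_lt_one (by norm_num) (by norm_num)]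
          norm_num
      _ = (4/3) * b^2 := by ring
  have hterm1 : |f 1 - b * (ε (-2) / a)| ≤ b^2 := by
    rw [hf1]
    have : -b * sCF a b ε (-2) - b * (ε (-2) / a) = -b * (sCF a b ε (-2) + ε (-2)/a) := by ring
    rw [this, abs_mul, abs_neg]
    calc |b| * |sCF a b ε (-2) + ε (-2)/a| ≤ |b| * |b| :=
          mul_le_mul_of_nonneg_left (sCF_first ha1 ha2 hb hε (-2)) (abs_nonneg b)
      _ = b^2 := by rw [← abs_mul, ← sq, abs_sq]
  have : pFun a b ε - 1 - b * (ε (-2) / a) = (f 1 - b * (ε (-2)/a)) + ∑' k, f (k+2) := by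
    rw [hsplit, hf0]; ring
  rw [this]
  calc |(f 1 - b * (ε (-2)/a)) + ∑' k, f (k+2)|
      ≤ |f 1 - b * (ε (-2)/a)| + |∑' k, f (k+2)| := abs_add_le _ _
    _ ≤ b^2 + (4/3)*b^2 := add_le_add hterm1 htail
    _ ≤ 3 * b^2 := by nlinarith [sq_nonneg b]

end PQ2

section PQ3
variable {a b : ℝ} {ε : ℤ → ℝ}

set_option maxHeartbeats 1000000 in
lemma q_expand (ha1 : 1 < a) (ha2 : a ≤ 2) (hb : |b| ≤ (a-1)^2/4)
    (hε : ∀ n, ε n = 1 ∨ ε n = -1) :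
    |qFun a b ε - Qzero a ε - b * Qone a ε| ≤ Cq a * b^2 := by
  obtain ⟨hv0, hv23, hv1⟩ := v_facts ha1 ha2
  have hg := summable_qterm ha1 ha2 hb hε
  have hA := summable_Aterm ha1 ha2 hε
  have hB := summable_Bterm ha1 ha2 hε
  have hq : qFun a b ε = ∑' n : ℕ, (-1:ℝ)^n * Gprod a b ε (n+1) := rfl
  have hsplit : qFun a b ε - Qzero a ε - b * Qone a ε
      = ∑' n : ℕ, ((-1:ℝ)^n * Gprod a b ε (n+1) - (-1:ℝ)^n * Aseq a ε (n+1)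
          - b * ((-1:ℝ)^n * Bseq a ε (n+1))) := by
    rw [hq, Qzero, Qone, ← tsum_mul_left, ← Summable.tsum_sub hg hA,
      ← Summable.tsum_sub (hg.sub hA) (hB.mul_left b)]
  rw [hsplit]
  have hbd : ∀ n : ℕ, ‖(-1:ℝ)^n * Gprod a b ε (n+1) - (-1:ℝ)^n * Aseq a ε (n+1)
      - b * ((-1:ℝ)^n * Bseq a ε (n+1))‖ ≤ 3*((n:ℝ)+1)^2*(2/(a+1))^n * b^2 := by
    intro n
    have h1 : (-1:ℝ)^n * Gprod a b ε (n+1) - (-1:ℝ)^n * Aseq a ε (n+1)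
        - b * ((-1:ℝ)^n * Bseq a ε (n+1))
        = (-1:ℝ)^n * (Gprod a b ε (n+1) - Aseq a ε (n+1) - b * Bseq a ε (n+1)) := by ring
    rw [Real.norm_eq_abs, h1, abs_mul, abs_pow, abs_neg, abs_one, one_pow, one_mul]
    have hD := Delta_bound ha1 ha2 hb hε (n+1)
    rw [pow_succ] at hD
    have := (mul_le_mul_iff_of_pos_right hv0).mp (by
      calc |Gprod a b ε (n+1) - Aseq a ε (n+1) - b * Bseq a ε (n+1)| * (2/(a+1))
          ≤ 3 * ((n+1:ℕ):ℝ)^2 * b^2 * ((2/(a+1))^n * (2/(a+1))) := hD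
        _ = (3 * ((n+1:ℕ):ℝ)^2 * b^2 * (2/(a+1))^n) * (2/(a+1)) := by ring)
    calc |Gprod a b ε (n+1) - Aseq a ε (n+1) - b * Bseq a ε (n+1)|
        ≤ 3 * ((n+1:ℕ):ℝ)^2 * b^2 * (2/(a+1))^n := this
      _ = 3*((n:ℝ)+1)^2*(2/(a+1))^n * b^2 := by push_cast; ring
  have hs : Summable (fun n : ℕ => (-1:ℝ)^n * Gprod a b ε (n+1) - (-1:ℝ)^n * Aseq a ε (n+1)
      - b * ((-1:ℝ)^n * Bseq a ε (n+1))) := (hg.sub hA).sub (hB.mul_left b)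
  have hsn := hs.abs
  have hsg : Summable (fun n : ℕ => 3*((n:ℝ)+1)^2*(2/(a+1))^n * b^2) :=
    (summable_n2v ha1 ha2).mul_right _
  calc |∑' n : ℕ, ((-1:ℝ)^n * Gprod a b ε (n+1) - (-1:ℝ)^n * Aseq a ε (n+1)
      - b * ((-1:ℝ)^n * Bseq a ε (n+1)))|
      ≤ ∑' n : ℕ, 3*((n:ℝ)+1)^2*(2/(a+1))^n * b^2 := by
        rw [← Real.norm_eq_abs]
        exact (norm_tsum_le_tsum_norm hsn).trans (Summable.tsum_le_tsum hbd hsn hsg)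
    _ = Cq a * b^2 := by rw [tsum_mul_right, Cq]

lemma pFun_zero (ha1 : 1 < a) : pFun a 0 ε = 1 := by
  rw [pFun]
  rw [tsum_eq_single 0 ?_]
  · simp
  · intro k hk
    rw [neg_zero, zero_pow hk, zero_mul]

lemma qFun_zero (ha1 : 1 < a) (hε : ∀ n, ε n = 1 ∨ ε n = -1) : qFun a 0 ε = Qzero a ε := by
  rw [qFun, Qzero]
  apply tsum_congr
  intro n
  congr 1
  rw [Aseq_eq_prod]
  apply Finset.prod_congr rfl
  intro j _
  exact rCF_zero ha1 hε (j : ℤ)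

end PQ3

section Deriv
variable {a : ℝ} {ε : ℤ → ℝ}

lemma key_taylor (ha1 : 1 < a) (ha2 : a ≤ 2) (hε : ∀ n, ε n = 1 ∨ ε n = -1)
    {b : ℝ} (hb : |b| ≤ (a-1)^2/4) :
    |(pFun a b ε - qFun a b ε) - (pFun a 0 ε - qFun a 0 ε)
      - b * (ε (-2)/a - Qone a ε)| ≤ (3 + Cq a) * b^2 := by
  rw [pFun_zero ha1, qFun_zero ha1 hε]
  have h1 := p_expand ha1 ha2 hb hε
  have h2 := q_expand ha1 ha2 hb hε
  have hsplit : (pFun a b ε - qFun a b ε) - (1 - Qzero a ε) - b * (ε (-2)/a - Qone a ε)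
      = (pFun a b ε - 1 - b * (ε (-2)/a)) - (qFun a b ε - Qzero a ε - b * Qone a ε) := by
    ring
  rw [hsplit]
  calc |(pFun a b ε - 1 - b * (ε (-2)/a)) - (qFun a b ε - Qzero a ε - b * Qone a ε)|
      ≤ |pFun a b ε - 1 - b * (ε (-2)/a)| + |qFun a b ε - Qzero a ε - b * Qone a ε| :=
        abs_sub _ _
    _ ≤ 3 * b^2 + Cq a * b^2 := add_le_add h1 h2
    _ = (3 + Cq a) * b^2 := by ring

lemma hasDerivAt_pq (ha1 : 1 < a) (ha2 : a ≤ 2) (hε : ∀ n, ε n = 1 ∨ ε n = -1) :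
    HasDerivAt (fun b => pFun a b ε - qFun a b ε) (ε (-2)/a - Qone a ε) 0 := by
  have hC0 : (0:ℝ) ≤ 3 + Cq a := by linarith [Cq_nonneg ha1 ha2]
  set C := 3 + Cq a with hCdef
  set d := ε (-2)/a - Qone a ε with hddef
  rw [hasDerivAt_iff_isLittleO]
  rw [Asymptotics.isLittleO_iff]
  intro c hc
  rw [Metric.eventually_nhds_iff]
  refine ⟨min ((a-1)^2/4) (c/(C+1)), lt_min (div_pos (pow_pos (by linarith) 2) (by norm_num)) (by positivity), ?_⟩
  intro b hbd
  rw [Real.dist_eq, sub_zero] at hbd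
  have hb1 : |b| ≤ (a-1)^2/4 := le_of_lt (lt_of_lt_of_le hbd (min_le_left _ _))
  have hb2 : |b| ≤ c/(C+1) := le_of_lt (lt_of_lt_of_le hbd (min_le_right _ _))
  have hkey := key_taylor ha1 ha2 hε hb1
  simp only [smul_eq_mul, sub_zero, Real.norm_eq_abs]
  have hCb : C * |b| ≤ c := by
    have h3 : C * |b| ≤ C * (c/(C+1)) := mul_le_mul_of_nonneg_left hb2 hC0
    have h4 : C * (c/(C+1)) ≤ c := by
      rw [← mul_div_assoc, div_le_iff₀ (by linarith : (0:ℝ) < C+1)]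
      nlinarith [hc.le, hC0]
    exact h3.trans h4
  calc |pFun a b ε - qFun a b ε - (pFun a 0 ε - qFun a 0 ε) - b * d|
      ≤ C * b^2 := hkey
    _ = (C * |b|) * |b| := by rw [sq, ← abs_mul_abs_self b]; ring
    _ ≤ c * |b| := mul_le_mul_of_nonneg_right hCb (abs_nonneg b)

end Deriv

noncomputable def tent' (a : ℝ) (x : ℝ) : ℝ := 1 - a * |x|
noncomputable def xseq (a : ℝ) (i : ℕ) : ℝ := (tent' a)^[i] 1
def Pprod (ε : ℤ → ℝ) (m : ℕ) : ℝ := ∏ i ∈ Finset.range m, ε i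
def eseq (ε : ℤ → ℝ) (j : ℕ) : ℝ := ε j * ε ((j:ℤ)+1)
def ccseq (ε : ℤ → ℝ) (m : ℕ) : ℝ := ∑ j ∈ Finset.range m, eseq ε j
def tseq (ε : ℤ → ℝ) (n : ℕ) : ℝ := (-1)^n * Pprod ε (n+1)
noncomputable def rseq (a : ℝ) (ε : ℤ → ℝ) (j : ℕ) : ℝ :=
  (-1)^j * Pprod ε j * (a * xseq a j / a^j)

section Knead
variable {a : ℝ} {ε : ℤ → ℝ}

lemma xseq_zero : xseq a 0 = 1 := rfl

lemma xseq_succ (i : ℕ) : xseq a (i+1) = 1 - a * |xseq a i| := by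
  rw [xseq, Function.iterate_succ_apply', tent']
  rfl

lemma xseq_abs (hε : ∀ n, ε n = 1 ∨ ε n = -1) (hx : ∀ i : ℕ, 0 ≤ ε i * xseq a i) (i : ℕ) :
    |xseq a i| = ε i * xseq a i := by
  have h0 := hx i
  rcases hε i with h | h
  · rw [h, one_mul] at h0 ⊢
    exact abs_of_nonneg h0
  · rw [h, neg_one_mul] at h0 ⊢
    rw [abs_of_nonpos (by linarith)]

lemma xseq_le_one (ha1 : 1 < a) (ha2 : a ≤ 2) (i : ℕ) : |xseq a i| ≤ 1 := by
  induction i with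
  | zero => rw [xseq_zero]; norm_num
  | succ i ih =>
    rw [xseq_succ, abs_le]
    constructor <;> nlinarith [abs_nonneg (xseq a i)]

lemma Pprod_succ (m : ℕ) : Pprod ε (m+1) = Pprod ε m * ε m := Finset.prod_range_succ _ _

lemma Pprod_pm (hε : ∀ n, ε n = 1 ∨ ε n = -1) (m : ℕ) : Pprod ε m = 1 ∨ Pprod ε m = -1 := by
  induction m with
  | zero => left; rfl
  | succ m ih =>
    rw [Pprod_succ]
    rcases ih with h | h <;> rcases hε m with h2 | h2 <;> rw [h, h2] <;> norm_num

lemma Pprod_sq (hε : ∀ n, ε n = 1 ∨ ε n = -1) (m : ℕ) : Pprod ε m ^ 2 = 1 := by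
  rcases Pprod_pm hε m with h | h <;> rw [h] <;> norm_num

lemma Pprod_abs (hε : ∀ n, ε n = 1 ∨ ε n = -1) (m : ℕ) : |Pprod ε m| = 1 := by
  rcases Pprod_pm hε m with h | h <;> rw [h] <;> norm_num

lemma Aseq_closed (ha1 : 1 < a) (m : ℕ) : Aseq a ε m = Pprod ε m / a^m := by
  have ha0 : a ≠ 0 := by linarith
  induction m with
  | zero => simp [Aseq, Pprod]
  | succ m ih =>
    rw [Aseq, ih, Pprod_succ, pow_succ]
    field_simp

lemma ccseq_succ (m : ℕ) : ccseq ε (m+1) = ccseq ε m + eseq ε m := Finset.sum_range_succ _ _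

lemma Bseq_closed (ha1 : 1 < a) (hε : ∀ n, ε n = 1 ∨ ε n = -1) (m : ℕ) :
    Bseq a ε m = -(Pprod ε m * ccseq ε m) / a^(m+2) := by
  have ha0 : a ≠ 0 := by linarith
  induction m with
  | zero => simp [Bseq, ccseq]
  | succ m ih =>
    rw [Bseq, ih, Aseq_closed ha1, Pprod_succ, ccseq_succ, eseq, pow_succ, pow_succ]
    rcases hε m with h | h <;> rw [h] <;> field_simp <;> ring

end Knead

section Knead2
variable {a : ℝ} {ε : ℤ → ℝ}

lemma W_identity (ha1 : 1 < a) (hε : ∀ n, ε n = 1 ∨ ε n = -1)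
    (hx : ∀ i : ℕ, 0 ≤ ε i * xseq a i) :
    ∀ N, ∑ n ∈ Finset.range N, tseq ε n / a^n = a - rseq a ε N := by
  have ha0 : a ≠ 0 := by linarith
  intro N
  induction N with
  | zero => simp [rseq, Pprod, xseq_zero]
  | succ N ih =>
    rw [Finset.sum_range_succ, ih, rseq, rseq, tseq, xseq_succ, xseq_abs hε hx,
      Pprod_succ, pow_succ, pow_succ]
    rcases hε N with h | h <;> rw [h] <;> field_simp <;> ring

lemma rseq_diff (ha1 : 1 < a) (hε : ∀ n, ε n = 1 ∨ ε n = -1)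
    (hx : ∀ i : ℕ, 0 ≤ ε i * xseq a i) (N : ℕ) :
    rseq a ε N - rseq a ε (N+1) = tseq ε N / a^N := by
  have h1 := W_identity ha1 hε hx N
  have h2 := W_identity ha1 hε hx (N+1)
  rw [Finset.sum_range_succ, h1] at h2
  linarith

lemma swap_identity (ha1 : 1 < a) (hε : ∀ n, ε n = 1 ∨ ε n = -1)
    (hx : ∀ i : ℕ, 0 ≤ ε i * xseq a i) :
    ∀ N, ∑ n ∈ Finset.range N, tseq ε n * ccseq ε (n+1) / a^n
      = (∑ j ∈ Finset.range N, eseq ε j * rseq a ε j) - ccseq ε N * rseq a ε N := by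
  intro N
  induction N with
  | zero => simp [ccseq]
  | succ N ih =>
    rw [Finset.sum_range_succ, ih, Finset.sum_range_succ, ccseq_succ]
    have hd := rseq_diff ha1 hε hx N
    have h2 : tseq ε N * (ccseq ε N + eseq ε N) / a ^ N
        = (ccseq ε N + eseq ε N) * (rseq a ε N - rseq a ε (N+1)) := by
      calc tseq ε N * (ccseq ε N + eseq ε N) / a ^ N
          = (ccseq ε N + eseq ε N) * (tseq ε N / a ^ N) := by ring
        _ = (ccseq ε N + eseq ε N) * (rseq a ε N - rseq a ε (N+1)) := by rw [← hd]
    rw [h2]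
    ring

end Knead2

section Knead3
variable {a : ℝ} {ε : ℤ → ℝ}

lemma eseq_abs (hε : ∀ n, ε n = 1 ∨ ε n = -1) (j : ℕ) : |eseq ε j| = 1 := by
  rw [eseq, abs_mul, eps_abs hε, eps_abs hε, mul_one]

lemma tseq_abs (hε : ∀ n, ε n = 1 ∨ ε n = -1) (n : ℕ) : |tseq ε n| = 1 := by
  rw [tseq, abs_mul, abs_pow, abs_neg, abs_one, one_pow, one_mul, Pprod_abs hε]

lemma ccseq_abs (hε : ∀ n, ε n = 1 ∨ ε n = -1) (m : ℕ) : |ccseq ε m| ≤ m := by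
  induction m with
  | zero => simp [ccseq]
  | succ m ih =>
    rw [ccseq_succ]
    calc |ccseq ε m + eseq ε m| ≤ |ccseq ε m| + |eseq ε m| := abs_add_le _ _
      _ ≤ m + 1 := by rw [eseq_abs hε]; linarith
      _ = ((m+1 : ℕ) : ℝ) := by push_cast; ring

lemma rseq_abs (ha1 : 1 < a) (ha2 : a ≤ 2) (hε : ∀ n, ε n = 1 ∨ ε n = -1) (j : ℕ) :
    |rseq a ε j| ≤ a * (1/a)^j := by
  have ha0 : (0:ℝ) < a := by linarith
  have hx1 := xseq_le_one ha1 ha2 j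
  rw [rseq, abs_mul, abs_mul, abs_pow, abs_neg, abs_one, one_pow, one_mul, Pprod_abs hε,
    one_mul, abs_div, abs_mul, abs_of_pos ha0, abs_of_pos (pow_pos ha0 j), one_div_pow,
    mul_one_div, div_le_div_iff₀ (pow_pos ha0 j) (pow_pos ha0 j)]
  nlinarith [mul_le_mul_of_nonneg_right hx1 (by positivity : (0:ℝ) ≤ a * a^j)]

lemma inv_a_lt_one (ha1 : 1 < a) : (0:ℝ) ≤ 1/a ∧ 1/a < 1 :=
  ⟨by positivity, by rw [div_lt_one (by linarith)]; linarith⟩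

lemma summable_inv_a (ha1 : 1 < a) : Summable (fun n : ℕ => (1/a)^n) :=
  summable_geometric_of_lt_one (inv_a_lt_one ha1).1 (inv_a_lt_one ha1).2

end Knead3

section Knead4
variable {a : ℝ} {ε : ℤ → ℝ}

lemma summable_V (ha1 : 1 < a) (ha2 : a ≤ 2) (hε : ∀ n, ε n = 1 ∨ ε n = -1) :
    Summable (fun j : ℕ => eseq ε j * rseq a ε j) := by
  apply Summable.of_norm_bounded ((summable_inv_a ha1).mul_left a)
  intro j
  rw [Real.norm_eq_abs, abs_mul, eseq_abs hε, one_mul]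
  exact rseq_abs ha1 ha2 hε j

lemma summable_nr (r : ℝ) (h0 : 0 ≤ r) (h1 : r < 1) :
    Summable (fun n : ℕ => ((n:ℝ)+1) * r^n) := by
  have hnorm : ‖r‖ < 1 := by rw [Real.norm_eq_abs, abs_of_nonneg h0]; exact h1
  have hn : Summable (fun n : ℕ => (n:ℝ) * r^n) := by
    have := summable_pow_mul_geometric_of_norm_lt_one 1 hnorm
    simpa using this
  have hg : Summable (fun n : ℕ => r^n) := summable_geometric_of_lt_one h0 h1
  have := hn.add hg
  convert this using 2 with n
  ring

lemma summable_S (ha1 : 1 < a) (hε : ∀ n, ε n = 1 ∨ ε n = -1) :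
    Summable (fun n : ℕ => tseq ε n * ccseq ε (n+1) / a^n) := by
  apply Summable.of_norm_bounded (summable_nr (1/a) (inv_a_lt_one ha1).1 (inv_a_lt_one ha1).2)
  intro n
  have ha0 : (0:ℝ) < a := by linarith
  rw [Real.norm_eq_abs, abs_div, abs_mul, tseq_abs hε, one_mul, abs_of_pos (pow_pos ha0 n)]
  have hcc := ccseq_abs hε (n+1)
  push_cast at hcc
  rw [one_div_pow, mul_one_div, div_le_div_iff₀ (pow_pos ha0 n) (pow_pos ha0 n)]
  nlinarith [mul_le_mul_of_nonneg_right hcc (by positivity : (0:ℝ) ≤ a^n)]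

end Knead4

section Knead5
variable {a : ℝ} {ε : ℤ → ℝ}

lemma cc_rseq_tendsto_zero (ha1 : 1 < a) (ha2 : a ≤ 2) (hε : ∀ n, ε n = 1 ∨ ε n = -1) :
    Tendsto (fun N => ccseq ε N * rseq a ε N) atTop (𝓝 0) := by
  have ha0 : (0:ℝ) < a := by linarith
  have hb : ∀ N : ℕ, |ccseq ε N * rseq a ε N| ≤ (N:ℝ) * (a * (1/a)^N) := by
    intro N
    rw [abs_mul]
    apply mul_le_mul (ccseq_abs hε N) (rseq_abs ha1 ha2 hε N) (abs_nonneg _)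
      (Nat.cast_nonneg N)
  have hg : Tendsto (fun N : ℕ => (N:ℝ) * (a * (1/a)^N)) atTop (𝓝 0) := by
    have hs : Summable (fun N : ℕ => (N:ℝ) * (a * (1/a)^N)) := by
      have hnorm : ‖(1/a : ℝ)‖ < 1 := by
        rw [Real.norm_eq_abs, abs_of_nonneg (inv_a_lt_one ha1).1]
        exact (inv_a_lt_one ha1).2
      have := (summable_pow_mul_geometric_of_norm_lt_one 1 hnorm).mul_left a
      convert this using 2 with n
      · rfl
      ring
    exact hs.tendsto_atTop_zero
  exact squeeze_zero_norm hb hg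

lemma S_eq_V (ha1 : 1 < a) (ha2 : a ≤ 2) (hε : ∀ n, ε n = 1 ∨ ε n = -1)
    (hx : ∀ i : ℕ, 0 ≤ ε i * xseq a i) :
    ∑' n : ℕ, tseq ε n * ccseq ε (n+1) / a^n = ∑' j : ℕ, eseq ε j * rseq a ε j := by
  have hS := summable_S ha1 hε
  have hV := summable_V ha1 ha2 hε
  have h1 : Tendsto (fun N => ∑ n ∈ Finset.range N, tseq ε n * ccseq ε (n+1) / a^n) atTop
      (𝓝 (∑' n : ℕ, tseq ε n * ccseq ε (n+1) / a^n)) := hS.hasSum.tendsto_sum_nat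
  have h2 : Tendsto (fun N => (∑ j ∈ Finset.range N, eseq ε j * rseq a ε j)
      - ccseq ε N * rseq a ε N) atTop (𝓝 (∑' j : ℕ, eseq ε j * rseq a ε j - 0)) :=
    hV.hasSum.tendsto_sum_nat.sub (cc_rseq_tendsto_zero ha1 ha2 hε)
  rw [sub_zero] at h2
  have h3 : (fun N => ∑ n ∈ Finset.range N, tseq ε n * ccseq ε (n+1) / a^n)
      = fun N => (∑ j ∈ Finset.range N, eseq ε j * rseq a ε j) - ccseq ε N * rseq a ε N :=
    funext (swap_identity ha1 hε hx)
  rw [h3] at h1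
  exact tendsto_nhds_unique h1 h2

lemma Qone_eq (ha1 : 1 < a) (ha2 : a ≤ 2) (hε : ∀ n, ε n = 1 ∨ ε n = -1)
    (hx : ∀ i : ℕ, 0 ≤ ε i * xseq a i) :
    Qone a ε = -(1/a^3) * ∑' j : ℕ, eseq ε j * rseq a ε j := by
  have ha0 : a ≠ 0 := by linarith
  rw [← S_eq_V ha1 ha2 hε hx, Qone, ← tsum_mul_left]
  apply tsum_congr
  intro n
  rw [Bseq_closed ha1 hε (n+1), tseq]
  have hpow : a^(n+1+2) = a^n * a^3 := by rw [← pow_add]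
  rw [hpow]
  field_simp

end Knead5

section Knead6
variable {a : ℝ} {ε : ℤ → ℝ}

set_option maxHeartbeats 1000000 in
lemma tail_bound (ha1 : 1 < a) (ha2 : a ≤ 2) (hε : ∀ n, ε n = 1 ∨ ε n = -1) (k : ℕ) :
    |∑' j : ℕ, eseq ε (j+k) * rseq a ε (j+k)| ≤ a^2 * (1/a)^k / (a-1) := by
  have ha0 : (0:ℝ) < a := by linarith
  have hV := summable_V ha1 ha2 hε
  have hsk : Summable (fun j : ℕ => eseq ε (j+k) * rseq a ε (j+k)) :=
    (summable_nat_add_iff k).mpr hV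
  have hbd : ∀ j : ℕ, ‖eseq ε (j+k) * rseq a ε (j+k)‖ ≤ (a * (1/a)^k) * (1/a)^j := by
    intro j
    rw [Real.norm_eq_abs, abs_mul, eseq_abs hε, one_mul]
    calc |rseq a ε (j+k)| ≤ a * (1/a)^(j+k) := rseq_abs ha1 ha2 hε (j+k)
      _ = (a * (1/a)^k) * (1/a)^j := by rw [pow_add]; ring
  have hsg : Summable (fun j : ℕ => (a * (1/a)^k) * (1/a)^j) :=
    (summable_inv_a ha1).mul_left _
  have hsn := hsk.abs
  have h1 : |∑' j : ℕ, eseq ε (j+k) * rseq a ε (j+k)| ≤ ∑' j : ℕ, (a * (1/a)^k) * (1/a)^j := by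
    rw [← Real.norm_eq_abs]
    exact (norm_tsum_le_tsum_norm hsn).trans (Summable.tsum_le_tsum hbd hsn hsg)
  refine h1.trans ?_
  rw [tsum_mul_left, tsum_geometric_of_lt_one (inv_a_lt_one ha1).1 (inv_a_lt_one ha1).2]
  have : (1 - 1/a)⁻¹ = a/(a-1) := by
    rw [show (1 - 1/a : ℝ) = (a-1)/a by field_simp]
    rw [inv_div]
  rw [this]
  apply le_of_eq
  ring

lemma eps_zero (ha1 : 1 < a) (hε : ∀ n, ε n = 1 ∨ ε n = -1)
    (hx : ∀ i : ℕ, 0 ≤ ε i * xseq a i) : ε 0 = 1 := by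
  have h0 := hx 0
  rw [xseq_zero, mul_one] at h0
  rcases hε 0 with h | h
  · exact_mod_cast h
  · exfalso
    rw [show ((0:ℕ):ℤ) = (0:ℤ) by norm_num, h] at h0
    linarith

lemma xseq_one (ha1 : 1 < a) : xseq a 1 = 1 - a := by
  rw [show (1:ℕ) = 0+1 by rfl, xseq_succ, xseq_zero, abs_one, mul_one]

lemma eps_one (ha1 : 1 < a) (hε : ∀ n, ε n = 1 ∨ ε n = -1)
    (hx : ∀ i : ℕ, 0 ≤ ε i * xseq a i) : ε 1 = -1 := by
  have h0 := hx 1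
  rw [xseq_one ha1, show ((1:ℕ):ℤ) = (1:ℤ) by norm_num] at h0
  rcases hε 1 with h | h
  · exfalso
    rw [h] at h0
    linarith
  · exact h

lemma xseq_two (ha1 : 1 < a) : xseq a 2 = 1 + a - a^2 := by
  rw [show (2:ℕ) = 1+1 by rfl, xseq_succ, xseq_one ha1,
    abs_of_nonpos (by linarith : (1:ℝ) - a ≤ 0)]
  ring

lemma Pprod_one : Pprod ε 1 = ε 0 := by
  rw [Pprod, Finset.prod_range_one]
  norm_num

lemma Pprod_two : Pprod ε 2 = ε 0 * ε 1 := by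
  rw [show (2:ℕ) = 1+1 by rfl, Pprod_succ, Pprod_one]
  norm_num

lemma rseq_zero' : rseq a ε 0 = a := by
  simp [rseq, Pprod, xseq_zero]

lemma rseq_one' (ha1 : 1 < a) (hε : ∀ n, ε n = 1 ∨ ε n = -1)
    (hx : ∀ i : ℕ, 0 ≤ ε i * xseq a i) : rseq a ε 1 = a - 1 := by
  have ha0 : a ≠ 0 := by linarith
  rw [rseq, Pprod_one, eps_zero ha1 hε hx, xseq_one ha1]
  field_simp
  ring

lemma rseq_two' (ha1 : 1 < a) (hε : ∀ n, ε n = 1 ∨ ε n = -1)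
    (hx : ∀ i : ℕ, 0 ≤ ε i * xseq a i) : rseq a ε 2 = -(xseq a 2)/a := by
  have ha0 : a ≠ 0 := by linarith
  rw [rseq, Pprod_two, eps_zero ha1 hε hx, eps_one ha1 hε hx]
  field_simp

end Knead6

section Knead7
variable {a : ℝ} {ε : ℤ → ℝ}

set_option maxHeartbeats 1000000 in
lemma V_bounds (ha1 : 1 < a) (ha2 : a ≤ 2) (hε : ∀ n, ε n = 1 ∨ ε n = -1)
    (hx : ∀ i : ℕ, 0 ≤ ε i * xseq a i) :
    (2*a^2-7*a+2)/(2*(a-1)) ≤ (∑' j : ℕ, eseq ε j * rseq a ε j) ∧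
    (∑' j : ℕ, eseq ε j * rseq a ε j) ≤ (2*a^2-7*a+8)/(2*(a-1)) := by
  have ha0 : (0:ℝ) < a := by linarith
  have ha10 : (0:ℝ) < a - 1 := by linarith
  have hV := summable_V ha1 ha2 hε
  have hV1 : Summable (fun j : ℕ => eseq ε (j+1) * rseq a ε (j+1)) :=
    (summable_nat_add_iff 1).mpr hV
  have hV2 : Summable (fun j : ℕ => eseq ε (j+2) * rseq a ε (j+2)) :=
    (summable_nat_add_iff 2).mpr hV
  have hsplit : (∑' j : ℕ, eseq ε j * rseq a ε j)
      = eseq ε 0 * rseq a ε 0 + (eseq ε 1 * rseq a ε 1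
        + ∑' j : ℕ, eseq ε (j+2) * rseq a ε (j+2)) := by
    rw [Summable.tsum_eq_zero_add hV, Summable.tsum_eq_zero_add hV1]
  have he0 : eseq ε 0 * rseq a ε 0 = -a := by
    rw [eseq, rseq_zero', show ((0:ℕ):ℤ) = (0:ℤ) by norm_num, eps_zero ha1 hε hx,
      show ((0:ℤ)+1) = (1:ℤ) by norm_num, eps_one ha1 hε hx]
    ring
  have he1 : eseq ε 1 * rseq a ε 1 = -(ε 2) * (a-1) := by
    rw [eseq, rseq_one' ha1 hε hx, show ((1:ℕ):ℤ) = (1:ℤ) by norm_num,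
      eps_one ha1 hε hx, show ((1:ℤ)+1) = (2:ℤ) by norm_num]
    ring
  set T2 := ∑' j : ℕ, eseq ε (j+2) * rseq a ε (j+2) with hT2def
  have hT2 : |T2| * (a-1) ≤ 1 := by
    have h := tail_bound ha1 ha2 hε 2
    have heq : a^2*(1/a)^2/(a-1) = 1/(a-1) := by
      rw [one_div_pow]
      field_simp
    rw [heq] at h
    calc |T2| * (a-1) ≤ (1/(a-1))*(a-1) := mul_le_mul_of_nonneg_right h (le_of_lt ha10)
      _ = 1 := by field_simp
  have hT2a : -1 ≤ T2*(a-1) := by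
    have := mul_le_mul_of_nonneg_right (neg_abs_le T2) (le_of_lt ha10)
    nlinarith
  have hT2b : T2*(a-1) ≤ 1 := by
    have := mul_le_mul_of_nonneg_right (le_abs_self T2) (le_of_lt ha10)
    linarith
  rcases hε 2 with h2 | h2
  · -- ε 2 = 1 : refined splitting
    have hsplit3 : T2 = eseq ε 2 * rseq a ε 2 + ∑' j : ℕ, eseq ε (j+3) * rseq a ε (j+3) :=
      Summable.tsum_eq_zero_add hV2
    set T3 := ∑' j : ℕ, eseq ε (j+3) * rseq a ε (j+3) with hT3def
    have hT3 : |T3| * (a*(a-1)) ≤ 1 := by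
      have h := tail_bound ha1 ha2 hε 3
      have heq : a^2*(1/a)^3/(a-1) = 1/(a*(a-1)) := by
        rw [one_div_pow]
        field_simp
      rw [heq] at h
      calc |T3| * (a*(a-1)) ≤ (1/(a*(a-1)))*(a*(a-1)) :=
            mul_le_mul_of_nonneg_right h (by positivity)
        _ = 1 := by field_simp
    have hT3a : -1 ≤ T3*(a*(a-1)) := by
      have := mul_le_mul_of_nonneg_right (neg_abs_le T3)
        (by positivity : (0:ℝ) ≤ a*(a-1))
      nlinarith
    have hT3b : T3*(a*(a-1)) ≤ 1 := by
      have := mul_le_mul_of_nonneg_right (le_abs_self T3)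
        (by positivity : (0:ℝ) ≤ a*(a-1))
      linarith
    have hx2 := xseq_two ha1
    have hx2nn : (0:ℝ) ≤ 1+a-a^2 := by
      have h0 := hx 2
      rw [show ((2:ℕ):ℤ) = (2:ℤ) by norm_num, h2, one_mul, hx2] at h0
      exact h0
    set E := eseq ε 2 * rseq a ε 2 with hEdef
    have hEabs : |E * a| ≤ 1+a-a^2 := by
      rw [hEdef, abs_mul, abs_mul, eseq_abs hε, one_mul, rseq_two' ha1 hε hx, hx2,
        abs_of_pos ha0, abs_div, abs_neg, abs_of_nonneg hx2nn, abs_of_pos ha0,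
        div_mul_cancel₀ _ (ne_of_gt ha0)]
    obtain ⟨hE1, hE2⟩ := abs_le.mp hEabs
    have hVval : (∑' j : ℕ, eseq ε j * rseq a ε j) = -a + (-(a-1) + (E + T3)) := by
      rw [hsplit, he0, he1, h2, hsplit3]
      ring
    have p1 : (0:ℝ) ≤ (E*a + (1+a-a^2))*(a-1) := mul_nonneg (by linarith) (by linarith)
    have p2 : (0:ℝ) ≤ ((1+a-a^2) - E*a)*(a-1) := mul_nonneg (by linarith) (by linarith)
    have p3 : (0:ℝ) ≤ 4*a*(1+a-a^2)*(a-1) := by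
      apply mul_nonneg (mul_nonneg (by linarith) hx2nn) (by linarith)
    have q4 : (0:ℝ) ≤ (a*(2*a-3))^2 := sq_nonneg _
    have q5 : (0:ℝ) ≤ a*(16*a-17)^2 := mul_nonneg ha0.le (sq_nonneg _)
    constructor
    · rw [div_le_iff₀ (by linarith : (0:ℝ) < 2*(a-1))]
      apply le_of_mul_le_mul_right _ ha0
      rw [hVval]
      nlinarith [hE1, hE2, hT3a, hT3b, hx2nn, p1, p2, p3, q4, q5]
    · rw [le_div_iff₀ (by linarith : (0:ℝ) < 2*(a-1))]
      apply le_of_mul_le_mul_right _ ha0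
      rw [hVval]
      nlinarith [hE1, hE2, hT3a, hT3b, hx2nn, p1, p2, p3, q4, q5]
  · -- ε 2 = -1
    have hVval : (∑' j : ℕ, eseq ε j * rseq a ε j) = -a + ((a-1) + T2) := by
      rw [hsplit, he0, he1, h2]
      ring
    have q1 : (0:ℝ) ≤ (2*a-1)*(2-a) := mul_nonneg (by linarith) (by linarith)
    have q2 : (0:ℝ) ≤ (4*a-5)^2 := sq_nonneg _
    constructor
    · rw [div_le_iff₀ (by linarith : (0:ℝ) < 2*(a-1))]
      rw [hVval]
      nlinarith [hT2a, hT2b, q1, q2]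
    · rw [le_div_iff₀ (by linarith : (0:ℝ) < 2*(a-1))]
      rw [hVval]
      nlinarith [hT2a, hT2b, q1, q2]

end Knead7

theorem deriv_p_sub_q_bounds :
    ∀ a : ℝ, 1 < a → a ≤ 2 → ∀ ε : ℤ → ℝ, (∀ n : ℤ, ε n = 1 ∨ ε n = -1) →
      (∀ i : ℕ, 0 ≤ ε (i : ℤ) * (tent a)^[i] 1) →
      ∃ d : ℝ, HasDerivAt (fun b => pFun a b ε - qFun a b ε) d 0 ∧
        1 / (a * ε (-2)) - (-2 * a ^ 2 + 7 * a - 2) / (2 * a ^ 3 * (a - 1)) ≤ d ∧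
        d ≤ 1 / (a * ε (-2)) - (-2 * a ^ 2 + 7 * a - 8) / (2 * a ^ 3 * (a - 1)) := by
  intro a ha1 ha2 ε hε hx0
  have hx : ∀ i : ℕ, 0 ≤ ε (i : ℤ) * xseq a i := hx0
  have ha0 : (0:ℝ) < a := by linarith
  have ha10 : (0:ℝ) < a - 1 := by linarith
  refine ⟨ε (-2)/a - Qone a ε, hasDerivAt_pq ha1 ha2 hε, ?_, ?_⟩ <;>
  · have hQ := Qone_eq ha1 ha2 hε hx
    obtain ⟨hVl, hVh⟩ := V_bounds ha1 ha2 hε hx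
    have h1div : 1/(a*ε (-2)) = ε (-2)/a := one_div_aeps ha1 hε (-2)
    have h3 : (0:ℝ) ≤ 1/a^3 := by positivity
    have hm := mul_le_mul_of_nonneg_left hVl h3
    have hM := mul_le_mul_of_nonneg_left hVh h3
    have e1 : (1/a^3) * ((2*a^2-7*a+2)/(2*(a-1)))
        = -((-2*a^2+7*a-2)/(2*a^3*(a-1))) := by
      field_simp
      ring
    have e2 : (1/a^3) * ((2*a^2-7*a+8)/(2*(a-1)))
        = -((-2*a^2+7*a-8)/(2*a^3*(a-1))) := by
      field_simp
      ring
    rw [h1div, hQ]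
    linarith [hm, hM, e1, e2]
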